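/- arXiv:1705.07509 — 3 statements merged into one kernel-verified Lean document; each statement's English description precedes it below -/
import Mathlib

section
/- Define the efficient score for q as ℓ̃_q(x) = (1/q)·1{x ≤ τ} - (∑_{k=0}^{τ} R_θ(k))/(1 - q·∑_{k=0}^{τ} R_θ(k))·1{x > τ} + R_θ(0)/(1 - q·R_θ(0)) for x ≥ 1. Then ∑_{x≥1} ℓ̃_q(x)·f⁺(x) = 0, where f⁺(x) = (q·R_θ(x) + (1-q)F(x))/(1 - q·R_θ(0)). -/
/-- The efficient score for `q` has zero mean under the zero-truncated mixture:
`∑_{x≥1} ℓ̃_q(x) f⁺(x) = 0`. -/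
theorem stmt_12 (R F : ℕ → ℝ) (q : ℝ) (τ : ℕ)
    (hq : 0 < q) (hq1 : q < 1) (hτ : 1 ≤ τ)
    (hR : ∀ x, 0 ≤ R x) (hRsummable : Summable R) (hRsum : ∑' x, R x = 1)
    (hF : ∀ x, 0 ≤ F x) (hFsummable : Summable F) (hFsum : ∑' x, F x = 1)
    (hFsupp : ∀ x, x ≤ τ → F x = 0)
    (hden0 : q * R 0 < 1)
    (hdenA : q * ∑ k ∈ Finset.range (τ + 1), R k < 1) :
    let A : ℝ := ∑ k ∈ Finset.range (τ + 1), R k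
    let fplus : ℕ → ℝ := fun x => (q * R x + (1 - q) * F x) / (1 - q * R 0)
    let score : ℕ → ℝ := fun x =>
      (if x ≤ τ then 1 / q else 0) - (if τ < x then A / (1 - q * A) else 0)
        + R 0 / (1 - q * R 0)
    (∑' x : ℕ, if 1 ≤ x then score x * fplus x else 0) = 0 := by
  intro A fplus score
  have hD : (0:ℝ) < 1 - q * R 0 := by linarith
  have hDA : (0:ℝ) < 1 - q * A := by linarith
  have hq' : q ≠ 0 := hq.ne'
  have hD' : 1 - q * R 0 ≠ 0 := hD.ne'
  have hDA' : 1 - q * A ≠ 0 := hDA.ne'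
  set a : ℝ := (1/q + R 0 / (1 - q * R 0)) * q / (1 - q * R 0) with ha
  set b : ℝ := (R 0 / (1 - q * R 0) - A / (1 - q * A)) * q / (1 - q * R 0) with hb
  set c : ℝ := (R 0 / (1 - q * R 0) - A / (1 - q * A)) * (1 - q) / (1 - q * R 0) with hc
  have key : ∀ x : ℕ, (if 1 ≤ x then score x * fplus x else 0) =
      a * ((if x ≤ τ then R x else 0) - (if x = 0 then R 0 else 0))
      + b * (R x - (if x ≤ τ then R x else 0)) + c * F x := by
    intro x
    rcases Nat.eq_zero_or_pos x with h0 | h1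
    · subst h0
      simp [hFsupp 0 (Nat.zero_le τ), Nat.zero_le τ]
    · rcases le_or_gt x τ with hle | hgt
      · have hx1 : 1 ≤ x := h1
        have hF0 : F x = 0 := hFsupp x hle
        have hxne : x ≠ 0 := by omega
        simp only [if_pos hx1, if_pos hle, if_neg (not_lt.mpr hle), if_neg hxne,
          score, fplus, hF0]
        rw [ha]
        field_simp
        ring
      · have hx1 : 1 ≤ x := h1
        have hxne : x ≠ 0 := by omega
        simp only [if_pos hx1, if_neg (not_le.mpr hgt), if_pos hgt, if_neg hxne,
          score, fplus]
        rw [hb, hc]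
        field_simp
        ring
  have hind : Summable (fun x : ℕ => if x ≤ τ then R x else 0) := by
    apply summable_of_ne_finset_zero (s := Finset.range (τ + 1))
    intro x hx
    rw [Finset.mem_range, not_lt] at hx
    rw [if_neg (by omega)]
  have h0s : Summable (fun x : ℕ => if x = 0 then R 0 else 0) := by
    apply summable_of_ne_finset_zero (s := {0})
    intro x hx
    simp at hx
    rw [if_neg hx]
  have tind : (∑' x : ℕ, if x ≤ τ then R x else 0) = A := by
    rw [tsum_eq_sum (s := Finset.range (τ + 1))
      (by intro x hx; rw [Finset.mem_range, not_lt] at hx; rw [if_neg (by omega)])]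
    exact Finset.sum_congr rfl (fun x hx => by
      rw [Finset.mem_range] at hx; rw [if_pos (by omega)])
  have t0 : (∑' x : ℕ, if x = 0 then R 0 else 0) = R 0 := tsum_ite_eq 0 (fun _ => R 0)
  have hs1 : Summable (fun x : ℕ => (if x ≤ τ then R x else 0) - (if x = 0 then R 0 else 0)) :=
    hind.sub h0s
  have hs2 : Summable (fun x : ℕ => R x - (if x ≤ τ then R x else 0)) :=
    hRsummable.sub hind
  calc (∑' x : ℕ, if 1 ≤ x then score x * fplus x else 0)
      = ∑' x : ℕ, (a * ((if x ≤ τ then R x else 0) - (if x = 0 then R 0 else 0))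
        + b * (R x - (if x ≤ τ then R x else 0)) + c * F x) := tsum_congr key
    _ = a * (A - R 0) + b * (1 - A) + c * 1 := by
        rw [Summable.tsum_add (((hs1.mul_left a).add (hs2.mul_left b)))
          (hFsummable.mul_left c),
          Summable.tsum_add (hs1.mul_left a) (hs2.mul_left b),
          tsum_mul_left, tsum_mul_left, tsum_mul_left,
          Summable.tsum_sub hind h0s, Summable.tsum_sub hRsummable hind, tind, t0, hRsum, hFsum]
    _ = 0 := by
        rw [ha, hb, hc]
        field_simp
        ring
end

section
/- With ℓ̃_q as defined (efficient score for q), the efficient Fisher information Ĩ_q = ∑_{x≥1} ℓ̃_q(x)² f⁺(x) equals (1/(1 - q R_θ(0)))·{ (1/q)·∑_{x=1}^{τ} R_θ(x) + (∑_{x=0}^{τ} R_θ(x))²/(1 - q·∑_{x=0}^{τ} R_θ(x)) - R_θ(0)²/(1 - q·R_θ(0)) }. -/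
/-- The efficient Fisher information for `q`:
`Ĩ_q = ∑_{x≥1} ℓ̃_q(x)² f⁺(x)` equals
`(1/(1-qR(0)))·{ (1/q)∑_{x=1}^τ R(x) + (∑_{x=0}^τ R(x))²/(1-q∑_{x=0}^τ R(x))
  - R(0)²/(1-qR(0)) }`. -/
theorem stmt_13 (R F : ℕ → ℝ) (q : ℝ) (τ : ℕ)
    (hq : 0 < q) (hq1 : q < 1) (hτ : 1 ≤ τ)
    (hR : ∀ x, 0 ≤ R x) (hRsummable : Summable R) (hRsum : ∑' x, R x = 1)
    (hF : ∀ x, 0 ≤ F x) (hFsummable : Summable F) (hFsum : ∑' x, F x = 1)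
    (hFsupp : ∀ x, x ≤ τ → F x = 0)
    (hden0 : q * R 0 < 1)
    (hdenA : q * ∑ k ∈ Finset.range (τ + 1), R k < 1) :
    let A : ℝ := ∑ k ∈ Finset.range (τ + 1), R k
    let fplus : ℕ → ℝ := fun x => (q * R x + (1 - q) * F x) / (1 - q * R 0)
    let score : ℕ → ℝ := fun x =>
      (if x ≤ τ then 1 / q else 0) - (if τ < x then A / (1 - q * A) else 0)
        + R 0 / (1 - q * R 0)
    (∑' x : ℕ, if 1 ≤ x then score x ^ 2 * fplus x else 0)
      = (1 / (1 - q * R 0)) *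
        ((1 / q) * (∑ x ∈ Finset.Icc 1 τ, R x)
          + A ^ 2 / (1 - q * A) - R 0 ^ 2 / (1 - q * R 0)) := by
  intro A fplus score
  have hD : (0:ℝ) < 1 - q * R 0 := by linarith
  have hE : (0:ℝ) < 1 - q * A := by linarith
  set g : ℕ → ℝ := fun x => if 1 ≤ x then score x ^ 2 * fplus x else 0 with hg
  set C : ℝ := (A / (1 - q * A) - R 0 / (1 - q * R 0)) ^ 2 with hC
  have hgshift : ∀ n : ℕ, g (n + (τ + 1)) =
      C * ((q * R (n + (τ + 1)) + (1 - q) * F (n + (τ + 1))) / (1 - q * R 0)) := by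
    intro n
    have h1 : 1 ≤ n + (τ + 1) := by omega
    have h2 : ¬ (n + (τ + 1) ≤ τ) := by omega
    have h3 : τ < n + (τ + 1) := by omega
    simp only [hg, hC, score, fplus, if_pos h1, if_neg h2, if_pos h3]
    ring
  have hRshift : Summable (fun n => R (n + (τ + 1))) :=
    (summable_nat_add_iff (τ + 1)).2 hRsummable
  have hFshift : Summable (fun n => F (n + (τ + 1))) :=
    (summable_nat_add_iff (τ + 1)).2 hFsummable
  have hsum_shift : Summable (fun n => g (n + (τ + 1))) := by
    simp only [hgshift]
    exact (((hRshift.mul_left q).add (hFshift.mul_left (1 - q))).div_const _).mul_left C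
  have hsumg : Summable g := (summable_nat_add_iff (τ + 1)).1 hsum_shift
  -- tail sums of R and F
  have hRtail : ∑' n, R (n + (τ + 1)) = 1 - A := by
    have := Summable.sum_add_tsum_nat_add (τ + 1) hRsummable
    rw [hRsum] at this
    simp only [A]
    linarith
  have hFfin : ∑ k ∈ Finset.range (τ + 1), F k = 0 := by
    apply Finset.sum_eq_zero
    intro x hx
    exact hFsupp x (by simpa [Nat.lt_succ_iff] using Finset.mem_range.1 hx)
  have hFtail : ∑' n, F (n + (τ + 1)) = 1 := by
    have := Summable.sum_add_tsum_nat_add (τ + 1) hFsummable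
    rw [hFsum, hFfin] at this
    linarith
  have htail : ∑' n, g (n + (τ + 1)) = C * ((q * (1 - A) + (1 - q)) / (1 - q * R 0)) := by
    simp only [hgshift]
    rw [tsum_mul_left, tsum_div_const,
      Summable.tsum_add (hRshift.mul_left q) (hFshift.mul_left (1 - q)),
      tsum_mul_left, tsum_mul_left, hRtail, hFtail]
    ring
  -- finite part
  have hIcc : Finset.range (τ + 1) = insert 0 (Finset.Icc 1 τ) := by
    ext x
    simp [Nat.lt_succ_iff]
    omega
  have h0notin : (0:ℕ) ∉ Finset.Icc 1 τ := by simp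
  have hfin : ∑ x ∈ Finset.range (τ + 1), g x =
      (1 / q + R 0 / (1 - q * R 0)) ^ 2 * (q / (1 - q * R 0))
        * ∑ x ∈ Finset.Icc 1 τ, R x := by
    rw [hIcc, Finset.sum_insert h0notin]
    have hg0 : g 0 = 0 := by simp [hg]
    rw [hg0, zero_add, Finset.mul_sum]
    apply Finset.sum_congr rfl
    intro x hx
    obtain ⟨hx1, hx2⟩ := Finset.mem_Icc.1 hx
    have h2 : ¬ τ < x := by omega
    simp only [hg, score, fplus, if_pos hx1, if_pos hx2, if_neg h2, hFsupp x hx2]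
    ring
  have hAsplit : A = R 0 + ∑ x ∈ Finset.Icc 1 τ, R x := by
    simp only [A, hIcc, Finset.sum_insert h0notin]
  -- combine
  have := Summable.sum_add_tsum_nat_add (τ + 1) hsumg
  rw [htail, hfin] at this
  rw [← this]
  rw [hAsplit]
  have hq' : q ≠ 0 := ne_of_gt hq
  have hD' : 1 - q * R 0 ≠ 0 := ne_of_gt hD
  have hE' : 1 - q * A ≠ 0 := ne_of_gt hE
  rw [hAsplit] at hE' hC
  rw [hC]
  field_simp
  ring
end

section
/- The equation D_τ/q + D·R_θ(0)/(1 - q·R_θ(0)) - (D - D_τ)·(∑_{k=0}^{τ} R_θ(k))/(1 - q·∑_{k=0}^{τ} R_θ(k)) = 0 in q ∈ (0,1) has the solution q = D_τ/(D·∑_{k=1}^{τ} R_θ(k) + D_τ·R_θ(0)). -/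
/-- `q̂ = D_τ/(D·∑_{k=1}^τ R(k) + D_τ·R(0))` solves the efficient score equation
`D_τ/q + D·R(0)/(1-qR(0)) - (D-D_τ)·(∑_{k=0}^τ R(k))/(1-q∑_{k=0}^τ R(k)) = 0`. -/
theorem stmt_14 (R : ℕ → ℝ) (τ : ℕ) (D Dτ : ℝ)
    (hR : ∀ x, 0 ≤ R x) (hRsum : ∑' x, R x = 1)
    (hτ : 1 ≤ τ) (hRpos : ∀ k, k ≤ τ → 0 < R k)
    (hDτ : 0 < Dτ) (hD : Dτ < D) :
    let qhat : ℝ := Dτ / (D * (∑ k ∈ Finset.Icc 1 τ, R k) + Dτ * R 0)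
    Dτ / qhat + D * R 0 / (1 - qhat * R 0)
      - (D - Dτ) * (∑ k ∈ Finset.range (τ + 1), R k) /
          (1 - qhat * ∑ k ∈ Finset.range (τ + 1), R k) = 0 := by
  intro qhat
  set S : ℝ := ∑ k ∈ Finset.Icc 1 τ, R k with hS
  set A : ℝ := R 0 with hA
  have hsplit : ∑ k ∈ Finset.range (τ + 1), R k = A + S := by
    rw [Finset.range_eq_Ico]
    rw [show Finset.Ico 0 (τ + 1) = insert 0 (Finset.Icc 1 τ) by
      ext x
      simp [Nat.lt_succ_iff, Nat.one_le_iff_ne_zero]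
      omega]
    rw [Finset.sum_insert (by simp)]
  have hSpos : 0 < S := by
    apply Finset.sum_pos' (fun i hi => hR i)
    exact ⟨1, by simp [hτ], hRpos 1 hτ⟩
  have hApos : 0 < A := hRpos 0 (by omega)
  have hDpos : 0 < D := hDτ.trans hD
  have hden : 0 < D * S + Dτ * A := by positivity
  have hq : qhat = Dτ / (D * S + Dτ * A) := rfl
  rw [hsplit, hq]
  have h1 : 1 - Dτ / (D * S + Dτ * A) * A = D * S / (D * S + Dτ * A) := by
    field_simp
    ring
  have h2 : 1 - Dτ / (D * S + Dτ * A) * (A + S) = (D - Dτ) * S / (D * S + Dτ * A) := by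
    field_simp
    ring
  rw [h1, h2]
  have hDS : D * S ≠ 0 := by positivity
  have hDDτ : (D - Dτ) * S ≠ 0 := by
    have : 0 < (D - Dτ) * S := by
      have : 0 < D - Dτ := by linarith
      positivity
    linarith
  have hDsub : D - Dτ ≠ 0 := sub_ne_zero.mpr hD.ne'
  field_simp
  ring
end
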